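/- Let α, β, w ∈ ℂ with |α|² + |β|² = 1 and |w| > 1. Then |β|² + |α − \bar{w}β|² ≥ 1/(4|w|²). -/

import Mathlib

/-- If `|α|² + |β|² = 1` and `|w| > 1`, then `|β|² + |α − conj(w) β|² ≥ 1/(4|w|²)`. -/
theorem stmt_2 (α β w : ℂ) (h : ‖α‖ ^ 2 + ‖β‖ ^ 2 = 1)
    (hw : 1 < ‖w‖) :
    1 / (4 * ‖w‖ ^ 2) ≤
      ‖β‖ ^ 2 + ‖α - (starRingEnd ℂ) w * β‖ ^ 2 := by
  set a := ‖α‖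
  set b := ‖β‖
  set c := ‖α - (starRingEnd ℂ) w * β‖
  set W := ‖w‖ with hW
  have htri : a ≤ c + W * b := by
    have : α = (α - (starRingEnd ℂ) w * β) + (starRingEnd ℂ) w * β := by ring
    calc a = ‖(α - (starRingEnd ℂ) w * β) + (starRingEnd ℂ) w * β‖ := by
            rw [← this]
      _ ≤ c + ‖(starRingEnd ℂ) w * β‖ := norm_add_le _ _
      _ = c + W * b := by rw [norm_mul, Complex.norm_conj]
  have ha : 0 ≤ a := norm_nonneg _
  have hb : 0 ≤ b := norm_nonneg _
  have hc : 0 ≤ c := norm_nonneg _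
  have hWpos : (0:ℝ) < 4 * W ^ 2 := by positivity
  rw [div_le_iff₀ hWpos]
  have ha2 : a ^ 2 ≤ (c + W * b) ^ 2 := by nlinarith
  nlinarith [sq_nonneg (W * c - b), sq_nonneg (W - 1), mul_nonneg hb hc, sq_nonneg b, sq_nonneg c]
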